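/- Let μ be a pure point measure on ℝⁿ supported on a uniformly discrete set Λ which is a temperate distribution, and suppose its Fourier transform μ̂ is also a pure point measure supported on a uniformly discrete set S. Then the atoms of μ are uniformly bounded: sup_{λ∈Λ} |μ(λ)| < ∞. -/

import Mathlib

open MeasureTheory Filter Metric Set
open scoped FourierTransform

section Aux

variable {E : Type*} [NormedAddCommGroup E] [InnerProductSpace ℝ E] [FiniteDimensional ℝ E]

/-- A compactly supported smooth bump, recentred at `c`, as a complex-valued Schwartz map. -/
noncomputable def bumpSchwartz (B : ContDiffBump (0 : E)) (c : E) : SchwartzMap E ℂ where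
  toFun x := (B (x - c) : ℂ)
  smooth' := by
    have h1 : ContDiff ℝ ((⊤ : ℕ∞)) (fun x : E => x - c) := contDiff_id.sub contDiff_const
    exact Complex.ofRealCLM.contDiff.comp (B.contDiff.comp h1)
  decay' := by
    intro k m
    have h1 : ContDiff ℝ ((⊤ : ℕ∞)) (fun x : E => x - c) := contDiff_id.sub contDiff_const
    have hsmooth : ContDiff ℝ ((⊤ : ℕ∞) : WithTop ℕ∞) (fun x : E => (B (x - c) : ℂ)) :=
      Complex.ofRealCLM.contDiff.comp (B.contDiff.comp h1)
    have hsupp : HasCompactSupport (fun x : E => (B (x - c) : ℂ)) := by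
      apply HasCompactSupport.intro (isCompact_closedBall c B.rOut)
      intro x hx
      have : B.rOut ≤ dist (x - c) 0 := by
        rw [dist_zero_right, ← dist_eq_norm]
        exact le_of_lt (by simpa [Metric.mem_closedBall] using hx)
      simp [B.zero_of_le_dist this]
    have hsupp2 : HasCompactSupport
        (fun x : E => ‖x‖ ^ k * ‖iteratedFDeriv ℝ m (fun x : E => (B (x - c) : ℂ)) x‖) :=
      HasCompactSupport.mul_left ((hsupp.iteratedFDeriv m).norm)
    have hcont : Continuous
        (fun x : E => ‖x‖ ^ k * ‖iteratedFDeriv ℝ m (fun x : E => (B (x - c) : ℂ)) x‖) :=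
      (continuous_norm.pow k).mul (hsmooth.continuous_iteratedFDeriv (mod_cast le_top)).norm
    obtain ⟨C, hC⟩ := hsupp2.exists_bound_of_continuous hcont
    exact ⟨C, fun x => le_trans (le_abs_self _) (hC x)⟩

@[simp] lemma bumpSchwartz_apply (B : ContDiffBump (0 : E)) (c x : E) :
    bumpSchwartz B c x = (B (x - c) : ℂ) := rfl

variable [MeasurableSpace E] [BorelSpace E]

lemma norm_fourierIntegralInv_bumpSchwartz (B : ContDiffBump (0 : E)) (c s : E) :
    ‖𝓕⁻ (bumpSchwartz B c) s‖ = ‖𝓕⁻ (bumpSchwartz B 0) s‖ := by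
  have h : ⇑(bumpSchwartz B c) = ⇑(bumpSchwartz B 0) ∘ (fun x => x + (-c)) := by
    funext x
    simp [sub_eq_add_neg]
  rw [SchwartzMap.fourierInv_coe, SchwartzMap.fourierInv_coe, Real.fourierInv_eq_fourier_neg,
    Real.fourierInv_eq_fourier_neg, h]
  show ‖VectorFourier.fourierIntegral 𝐞 volume (innerₗ E)
      (⇑(bumpSchwartz B 0) ∘ fun x => x + (-c)) (-s)‖ = _
  rw [VectorFourier.fourierIntegral_comp_add_right]
  exact Circle.norm_smul _ _

end Aux

/-- If a temperate pure point measure on a uniformly discrete set Λ has a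
Fourier transform which is a pure point measure on a uniformly discrete set S, then its
atoms are uniformly bounded. -/
theorem stmt1 (n : ℕ) (Λ S : Set (EuclideanSpace ℝ (Fin n)))
    (hΛ : ∃ d > 0, ∀ x ∈ Λ, ∀ y ∈ Λ, x ≠ y → d ≤ dist x y)
    (hS : ∃ d > 0, ∀ x ∈ S, ∀ y ∈ S, x ≠ y → d ≤ dist x y)
    (a b : EuclideanSpace ℝ (Fin n) → ℂ)
    (T : SchwartzMap (EuclideanSpace ℝ (Fin n)) ℂ →L[ℂ] ℂ)
    (hT : ∀ φ : SchwartzMap (EuclideanSpace ℝ (Fin n)) ℂ,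
      HasSum (fun l : Λ => a l * φ l) (T φ))
    (ha : ∀ l ∈ Λ, a l ≠ 0)
    (hFT : ∀ φ : SchwartzMap (EuclideanSpace ℝ (Fin n)) ℂ,
      HasSum (fun s : S => b s * φ s) (T (SchwartzMap.fourierTransformCLM ℂ φ)))
    (hb : ∀ s ∈ S, b s ≠ 0) :
    ∃ C : ℝ, ∀ l ∈ Λ, ‖a l‖ ≤ C := by
  classical
  obtain ⟨d, hd, hsep⟩ := hΛ
  set B : ContDiffBump (0 : EuclideanSpace ℝ (Fin n)) :=
    ⟨d / 3, d / 2, by positivity, by linarith⟩ with hB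
  set ψ : EuclideanSpace ℝ (Fin n) → SchwartzMap (EuclideanSpace ℝ (Fin n)) ℂ :=
    fun c => bumpSchwartz B c with hψ
  set φ : EuclideanSpace ℝ (Fin n) → SchwartzMap (EuclideanSpace ℝ (Fin n)) ℂ :=
    fun c => (SchwartzMap.fourierTransformCLE ℂ (SchwartzMap (EuclideanSpace ℝ (Fin n)) ℂ)).symm (ψ c) with hφ
  have hFTφ : ∀ c, SchwartzMap.fourierTransformCLM ℂ (φ c) = ψ c := by
    intro c
    have : SchwartzMap.fourierTransformCLM ℂ (φ c)
        = (SchwartzMap.fourierTransformCLE ℂ (SchwartzMap (EuclideanSpace ℝ (Fin n)) ℂ)) (φ c) := rfl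
    rw [this, hφ]
    exact (SchwartzMap.fourierTransformCLE ℂ (SchwartzMap (EuclideanSpace ℝ (Fin n)) ℂ)).apply_symm_apply (ψ c)
  -- pointwise norms of φ c don't depend on c
  have hnorm : ∀ c s, ‖(φ c) s‖ = ‖(φ 0) s‖ := by
    intro c s
    have h1 : ⇑(φ c) = 𝓕⁻ ⇑(ψ c) :=
      (congrArg DFunLike.coe (SchwartzMap.fourierTransformCLE_symm_apply (R := ℂ) (ψ c))).trans
        (SchwartzMap.fourierInv_coe _)
    have h2 : ⇑(φ 0) = 𝓕⁻ ⇑(ψ 0) :=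
      (congrArg DFunLike.coe (SchwartzMap.fourierTransformCLE_symm_apply (R := ℂ) (ψ 0))).trans
        (SchwartzMap.fourierInv_coe _)
    rw [show (φ c) s = 𝓕⁻ ⇑(ψ c) s from congrFun h1 s,
      show (φ 0) s = 𝓕⁻ ⇑(ψ 0) s from congrFun h2 s]
    have h3 := norm_fourierIntegralInv_bumpSchwartz B c s
    rwa [SchwartzMap.fourierInv_coe, SchwartzMap.fourierInv_coe] at h3
  -- key identity: a l is the sum over S
  have key : ∀ l, ∀ hl : l ∈ Λ, HasSum (fun s : S => b s * φ l s) (a l) := by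
    intro l hl
    have h1 := hFT (φ l)
    rw [hFTφ l] at h1
    have h2 := hT (ψ l)
    have h3 : (fun m : Λ => a m * ψ l m) = fun m : Λ => if m = (⟨l, hl⟩ : Λ) then a l else 0 := by
      funext m
      by_cases hm : m = (⟨l, hl⟩ : Λ)
      · have h1 : (ψ l) l = 1 := by
          simp only [hψ, bumpSchwartz_apply, sub_self]
          rw [B.one_of_mem_closedBall (Metric.mem_closedBall_self (by positivity))]
          norm_num
        rw [if_pos hm, hm]
        simp [h1]
      · have hne : (m : EuclideanSpace ℝ (Fin n)) ≠ l := fun h => hm (Subtype.ext h)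
        have hdist : d ≤ dist (m : EuclideanSpace ℝ (Fin n)) l := hsep m m.2 l hl hne
        have h0 : (ψ l) m = 0 := by
          simp only [hψ, bumpSchwartz_apply]
          rw [B.zero_of_le_dist (by
            rw [dist_zero_right, ← dist_eq_norm]
            calc B.rOut = d / 2 := rfl
            _ ≤ d := by linarith
            _ ≤ dist (m : EuclideanSpace ℝ (Fin n)) l := hdist)]
          norm_num
        rw [if_neg hm, h0, mul_zero]
    rw [h3] at h2
    have h4 : T (ψ l) = a l := h2.unique (hasSum_ite_eq (⟨l, hl⟩ : Λ) (a l))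
    rwa [h4] at h1
  -- the uniform bound
  have hsum0 : Summable (fun s : S => ‖b s * φ 0 s‖) := (hFT (φ 0)).summable.norm
  refine ⟨∑' s : S, ‖b s * φ 0 s‖, fun l hl => ?_⟩
  have hfun : (fun s : S => ‖b s * φ l s‖) = fun s : S => ‖b s * φ 0 s‖ := by
    funext s
    rw [norm_mul, norm_mul, hnorm l s]
  have hsuml : Summable (fun s : S => ‖b s * φ l s‖) := by rw [hfun]; exact hsum0
  calc ‖a l‖ = ‖∑' s : S, b s * φ l s‖ := by rw [(key l hl).tsum_eq]
    _ ≤ ∑' s : S, ‖b s * φ l s‖ := norm_tsum_le_tsum_norm hsuml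
    _ = ∑' s : S, ‖b s * φ 0 s‖ := by rw [hfun]
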